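/- Let $p$ be a prime, let $N = p^s$ be a positive power of $p$, and let $R$ be a commutative ring in which $p \cdot 1 = 0$. Suppose $\gamma_1, \dots, \gamma_N \in R$ satisfy $e_r(\gamma_1, \dots, \gamma_N) = 0$ for all $1 \leq r \leq N - 1$. Then for every nonempty partition $\mu$ of a positive integer having strictly fewer than $N$ parts, one has $m_{\mu}(\gamma_1, \dots, \gamma_N) = 0$ in $R$. -/

import Mathlib

open MvPolynomial

section auxlemmas

variable {T : Type*} [CommSemiring T]

private lemma eval₂_msymm' {σ : Type*} [Fintype σ] [DecidableEq σ] {R : Type*} [CommSemiring R]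
    (f : R →+* T) (g : σ → T) {k : ℕ} (μ : Nat.Partition k) :
    MvPolynomial.eval₂ f g (MvPolynomial.msymm σ R μ) =
      ∑ s : {a : Sym σ k // Nat.Partition.ofSym a = μ}, (s.1.1.map g).prod := by
  rw [msymm, ← coe_eval₂Hom, map_sum]
  refine Finset.sum_congr rfl fun s _ => ?_
  rw [← Multiset.prod_hom _ (eval₂Hom f g), Multiset.map_map]
  congr 1
  exact Multiset.map_congr rfl fun i _ => eval₂Hom_X' f g i

private lemma eval₂_esymm' {σ : Type*} [Fintype σ] {R : Type*} [CommSemiring R]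
    (f : R →+* T) (x : T) (r : ℕ) :
    MvPolynomial.eval₂ f (fun _ => x) (MvPolynomial.esymm σ R r) =
      (Fintype.card σ).choose r • x ^ r := by
  rw [esymm, ← coe_eval₂Hom, map_sum]
  rw [Finset.sum_congr rfl (fun t ht => ?_), Finset.sum_const,
    Finset.card_powersetCard, Finset.card_univ]
  rw [map_prod]
  have hcard := (Finset.mem_powersetCard.mp ht).2
  simp only [coe_eval₂Hom, eval₂_X]
  rw [Finset.prod_const, hcard]

end auxlemmas

private lemma aux_card (p s k : ℕ) (hp : p.Prime) (hs : 0 < s) (hk : 0 < k)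
    (μ : Nat.Partition k) (hcard : Multiset.card μ.parts < p ^ s) :
    p ∣ Fintype.card {a : Sym (Fin (p ^ s)) k // Nat.Partition.ofSym a = μ} := by
  classical
  set N := p ^ s with hN
  haveI : NeZero N := ⟨(pow_pos hp.pos s).ne'⟩
  haveI : Fact p.Prime := ⟨hp⟩
  set S := {a : Sym (Fin N) k // Nat.Partition.ofSym a = μ} with hS
  letI act : MulAction (Multiplicative (Fin N)) S :=
    { smul := fun g x => ⟨Sym.map (· + Multiplicative.toAdd g) x.1, by
        rw [show ((· + Multiplicative.toAdd g) : Fin N → Fin N)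
            = ⇑(Equiv.addRight (Multiplicative.toAdd g)) from rfl,
          Nat.Partition.ofSym_map, x.2]⟩
      one_smul := fun x => Subtype.ext (by
        show Sym.map _ x.1 = x.1
        simp)
      mul_smul := fun g h x => Subtype.ext (by
        show Sym.map _ x.1 = Sym.map _ (Sym.map _ x.1)
        rw [Sym.map_map]
        congr 1
        funext i
        show i + (Multiplicative.toAdd g + Multiplicative.toAdd h)
          = (i + Multiplicative.toAdd h) + Multiplicative.toAdd g
        abel) }
  have hPG : IsPGroup p (Multiplicative (Fin N)) := by
    apply IsPGroup.of_card (n := s)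
    simp [hN, Nat.card_eq_fintype_card]
  haveI : IsEmpty (MulAction.fixedPoints (Multiplicative (Fin N)) S) := by
    constructor
    rintro ⟨⟨x, hx⟩, hfix⟩
    rw [MulAction.mem_fixedPoints] at hfix
    -- all counts are equal
    have hcount : ∀ a b : Fin N, x.1.count a = x.1.count b := by
      intro a b
      have := hfix (Multiplicative.ofAdd (b - a))
      have hmul : Sym.map (· + (b - a)) x = x := Subtype.ext_iff.mp this
      have hms : x.1.map (· + (b - a)) = x.1 := by
        have := congrArg Subtype.val hmul
        exact this
      have hinj : Function.Injective (· + (b - a) : Fin N → Fin N) :=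
        fun u v huv => by simpa using congrArg (· - (b - a)) huv
      calc x.1.count a = (x.1.map (· + (b - a))).count (a + (b - a)) :=
            (Multiset.count_map_eq_count' _ _ hinj a).symm
        _ = x.1.count b := by rw [hms]; congr 1; abel
    -- x.1 is nonempty
    obtain ⟨a₀, ha₀⟩ : ∃ a, a ∈ x.1 := by
      apply Multiset.exists_mem_of_ne_zero
      intro h0
      have := x.2
      rw [h0] at this
      simp at this
      omega
    have hallmem : ∀ a : Fin N, a ∈ x.1 := by
      intro a
      rw [← Multiset.count_pos, hcount a a₀]
      rwa [Multiset.count_pos]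
    -- then μ has N parts
    have : Multiset.card μ.parts = N := by
      rw [← hx]
      show Multiset.card (x.1.dedup.map x.1.count) = N
      rw [Multiset.card_map]
      have : x.1.toFinset = Finset.univ := Finset.eq_univ_iff_forall.mpr (by
        intro a; rw [Multiset.mem_toFinset]; exact hallmem a)
      have h2 : x.1.toFinset.card = N := by rw [this, Finset.card_univ, Fintype.card_fin]
      rwa [Multiset.toFinset, Finset.card_mk] at h2
    omega
  have hmod := hPG.card_modEq_card_fixedPoints S
  have h0 : Nat.card (MulAction.fixedPoints (Multiplicative (Fin N)) S) = 0 :=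
    Nat.card_of_isEmpty
  rw [h0] at hmod
  rw [← Nat.card_eq_fintype_card]
  exact (Nat.modEq_zero_iff_dvd).mp hmod

/-- Let `p` be a prime, `N = p^s` a positive power of `p`, and `R` a commutative ring in
which `p·1 = 0`.  Suppose `γ₁, …, γ_N ∈ R` satisfy `e_r(γ₁,…,γ_N) = 0` for all
`1 ≤ r ≤ N - 1`.  Then for every nonempty partition `μ` of a positive integer having
strictly fewer than `N` parts, `m_μ(γ₁,…,γ_N) = 0` in `R`. -/
theorem msymm_eval_eq_zero_of_esymm_eval_eq_zero
    (p s : ℕ) (hp : p.Prime) (hs : 0 < s)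
    (R : Type) [CommRing R] (hpR : (p : R) = 0)
    (γ : Fin (p ^ s) → R)
    (he : ∀ r : ℕ, 1 ≤ r → r ≤ p ^ s - 1 →
      MvPolynomial.eval γ (MvPolynomial.esymm (Fin (p ^ s)) R r) = 0)
    (k : ℕ) (hk : 0 < k) (μ : Nat.Partition k)
    (hcard : Multiset.card μ.parts < p ^ s) :
    MvPolynomial.eval γ (MvPolynomial.msymm (Fin (p ^ s)) R μ) = 0 := by
  classical
  haveI : Fact p.Prime := ⟨hp⟩
  have hN1 : 1 < p ^ s := Nat.one_lt_pow hs.ne' hp.one_lt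
  -- fundamental theorem of symmetric polynomials over ℤ
  obtain ⟨φ, hφ⟩ := (esymmAlgHom_fin_bijective ℤ (p ^ s)).2
    ⟨msymm (Fin (p ^ s)) ℤ μ, (mem_symmetricSubalgebra _).mpr (msymm_isSymmetric _ _ μ)⟩
  have hφ' : eval₂ (Int.castRingHom (MvPolynomial (Fin (p ^ s)) ℤ))
      (fun i : Fin (p ^ s) => esymm (Fin (p ^ s)) ℤ ((i : ℕ) + 1)) φ
        = msymm (Fin (p ^ s)) ℤ μ := by
    have h := congrArg Subtype.val hφ
    rw [esymmAlgHom_apply, aeval_def] at h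
    refine Eq.trans ?_ h
    exact congrArg (fun f => eval₂ f _ φ) (Subsingleton.elim _ _)
  set c : R := eval γ (esymm (Fin (p ^ s)) R (p ^ s)) with hc
  set u : Fin (p ^ s) → Polynomial ℤ :=
    fun i => if (i : ℕ) = p ^ s - 1 then Polynomial.X else 0 with hu
  set q : Polynomial ℤ := eval₂ (Int.castRingHom (Polynomial ℤ)) u φ with hq
  -- Step 1 : eval γ (msymm R μ) = eval₂ ℤ-cast c q
  have step1 : eval γ (msymm (Fin (p ^ s)) R μ) = Polynomial.eval₂ (Int.castRingHom R) c q := by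
    have l1 : eval γ (msymm (Fin (p ^ s)) R μ)
        = eval₂ (Int.castRingHom R) γ (msymm (Fin (p ^ s)) ℤ μ) := by
      have h0 : eval γ (msymm (Fin (p ^ s)) R μ)
          = eval₂ (RingHom.id R) γ (msymm (Fin (p ^ s)) R μ) := rfl
      rw [h0, eval₂_msymm', eval₂_msymm']
    have l2 : eval₂ (Int.castRingHom R) γ (msymm (Fin (p ^ s)) ℤ μ)
        = eval₂ (Int.castRingHom R)
            (fun i : Fin (p ^ s) => if (i : ℕ) = p ^ s - 1 then c else 0) φ := by
      rw [← hφ', ← coe_eval₂Hom,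
        eval₂_comp_left (eval₂Hom (Int.castRingHom R) γ) (Int.castRingHom _) _ φ]
      congr 1
      · exact Subsingleton.elim _ _
      · funext i
        show eval₂Hom (Int.castRingHom R) γ (esymm (Fin (p ^ s)) ℤ ((i : ℕ) + 1)) = _
        rw [coe_eval₂Hom, eval₂_eq_eval_map, map_esymm]
        split_ifs with h
        · rw [hc, h, Nat.sub_add_cancel hN1.le]
        · refine he ((i : ℕ) + 1) le_add_self ?_
          have := i.isLt; omega
    have l3 : Polynomial.eval₂ (Int.castRingHom R) c q
        = eval₂ (Int.castRingHom R)
            (fun i : Fin (p ^ s) => if (i : ℕ) = p ^ s - 1 then c else 0) φ := by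
      rw [hq, show Polynomial.eval₂ (Int.castRingHom R) c
          = ⇑(Polynomial.eval₂RingHom (Int.castRingHom R) c) from rfl,
        eval₂_comp_left (Polynomial.eval₂RingHom (Int.castRingHom R) c) (Int.castRingHom _) u φ]
      congr 1
      · exact Subsingleton.elim _ _
      · funext i
        show Polynomial.eval₂RingHom (Int.castRingHom R) c (u i) = _
        rw [hu]
        simp only [apply_ite (Polynomial.eval₂RingHom (Int.castRingHom R) c), map_zero,
          Polynomial.coe_eval₂RingHom, Polynomial.eval₂_X]
    rw [l1, l2, ← l3]
  -- Step 2 : all coefficients of q are divisible by p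
  have hdvd : ∀ n : ℕ, (p : ℤ) ∣ q.coeff n := by
    set D := eval₂Hom ((Polynomial.C : ZMod p →+* Polynomial (ZMod p)).comp
        (Int.castRingHom (ZMod p)))
        (fun _ : Fin (p ^ s) => (Polynomial.X : Polynomial (ZMod p))) with hD
    have hDm : D (msymm (Fin (p ^ s)) ℤ μ) = 0 := by
      rw [hD, coe_eval₂Hom, eval₂_msymm']
      have hterm : ∀ s' : {a : Sym (Fin (p ^ s)) k // Nat.Partition.ofSym a = μ},
          (s'.1.1.map (fun _ : Fin (p ^ s) => (Polynomial.X : Polynomial (ZMod p)))).prod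
            = Polynomial.X ^ k := by
        intro s'
        rw [Multiset.map_const', Multiset.prod_replicate, s'.1.2]
      rw [Finset.sum_congr rfl (fun s' _ => hterm s'), Finset.sum_const, Finset.card_univ]
      rw [nsmul_eq_mul]
      have hcz : ((Fintype.card {a : Sym (Fin (p ^ s)) k // Nat.Partition.ofSym a = μ}
          : ZMod p)) = 0 := by
        rw [ZMod.natCast_eq_zero_iff]
        exact aux_card p s k hp hs hk μ hcard
      rw [← map_natCast (Polynomial.C : ZMod p →+* Polynomial (ZMod p)), hcz, map_zero, zero_mul]
    have hDφ : D (msymm (Fin (p ^ s)) ℤ μ)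
        = eval₂ (Int.castRingHom (Polynomial (ZMod p)))
            (fun i : Fin (p ^ s) =>
              if (i : ℕ) = p ^ s - 1 then Polynomial.X ^ (p ^ s) else 0) φ := by
      rw [← hφ', eval₂_comp_left D (Int.castRingHom _) _ φ]
      congr 1
      · exact Subsingleton.elim _ _
      · funext i
        show D (esymm (Fin (p ^ s)) ℤ ((i : ℕ) + 1)) = _
        rw [hD, coe_eval₂Hom, eval₂_esymm', Fintype.card_fin]
        split_ifs with h
        · rw [show (i : ℕ) + 1 = p ^ s by omega, Nat.choose_self, one_smul]
        · have h1 : (i : ℕ) + 1 ≠ 0 := by omega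
          have h2 : (i : ℕ) + 1 ≠ p ^ s := by have := i.isLt; omega
          have h3 : p ∣ (p ^ s).choose ((i : ℕ) + 1) := hp.dvd_choose_pow h1 h2
          rw [nsmul_eq_mul, ← map_natCast (Polynomial.C : ZMod p →+* Polynomial (ZMod p)),
            (ZMod.natCast_eq_zero_iff _ _).mpr h3, map_zero, zero_mul]
    have hq0 : Polynomial.eval₂ (Polynomial.C.comp (Int.castRingHom (ZMod p)))
        (Polynomial.X ^ (p ^ s)) q = 0 := by
      rw [hq, show Polynomial.eval₂ (Polynomial.C.comp (Int.castRingHom (ZMod p)))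
            (Polynomial.X ^ (p ^ s))
          = ⇑(Polynomial.eval₂RingHom (Polynomial.C.comp (Int.castRingHom (ZMod p)))
            (Polynomial.X ^ (p ^ s))) from rfl,
        eval₂_comp_left (Polynomial.eval₂RingHom (Polynomial.C.comp (Int.castRingHom (ZMod p)))
          (Polynomial.X ^ (p ^ s))) (Int.castRingHom _) u φ]
      rw [← hDm, hDφ]
      congr 1
      · exact Subsingleton.elim _ _
      · funext i
        show Polynomial.eval₂RingHom (Polynomial.C.comp (Int.castRingHom (ZMod p)))
          (Polynomial.X ^ (p ^ s)) (u i) = _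
        rw [hu]
        simp only [apply_ite (Polynomial.eval₂RingHom
            (Polynomial.C.comp (Int.castRingHom (ZMod p))) (Polynomial.X ^ (p ^ s))),
          map_zero, Polynomial.coe_eval₂RingHom, Polynomial.eval₂_X]
    have hmap : q.map (Int.castRingHom (ZMod p)) = 0 := by
      rw [← Polynomial.eval₂_map] at hq0
      have hcomp : (q.map (Int.castRingHom (ZMod p))).comp (Polynomial.X ^ (p ^ s)) = 0 := hq0
      rcases Polynomial.comp_eq_zero_iff.mp hcomp with h | ⟨h1, h2⟩
      · exact h
      · exfalso
        rw [Polynomial.coeff_X_pow, if_neg (by omega : ¬ 0 = p ^ s), Polynomial.C_0] at h2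
        exact pow_ne_zero (p ^ s) Polynomial.X_ne_zero h2
    intro n
    have h := congrArg (fun r => Polynomial.coeff r n) hmap
    simp only [Polynomial.coeff_map, Polynomial.coeff_zero] at h
    rwa [show (Int.castRingHom (ZMod p)) (q.coeff n) = ((q.coeff n : ℤ) : ZMod p) from rfl,
      ZMod.intCast_zmod_eq_zero_iff_dvd] at h
  -- Step 3 : conclude
  rw [step1, Polynomial.eval₂_eq_sum, Polynomial.sum_def]
  apply Finset.sum_eq_zero
  intro n _
  obtain ⟨b, hb⟩ := hdvd n
  rw [hb, map_mul, map_natCast, hpR, zero_mul, zero_mul]
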